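/- Let d ≥ 2 and let G be the group with presentation ⟨x_1^{(i)}, x_2^{(i)} (i ∈ ℤ/d) | x_1^{(i)} x_2^{(i)} = x_1^{(i+1)}, x_2^{(i)} x_1^{(i)} x_2^{(i)} = x_2^{(i+1)} (i ∈ ℤ/d)⟩. Then G is isomorphic to the cyclically presented group ⟨y_1, …, y_d | y_i⁻¹ y_{i+1}² y_{i+2}⁻¹ y_{i+1} (i ∈ ℤ/d)⟩, via the map sending x_1^{(i)} to y_i (indices mod d). -/

import Mathlib

/-- The fundamental group of the `d`-fold cyclic branched cover of `S³` branched over the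
figure-eight knot, presented as
`⟨x₁⁽ⁱ⁾, x₂⁽ⁱ⁾ (i ∈ ℤ/d) | x₁⁽ⁱ⁾x₂⁽ⁱ⁾ = x₁⁽ⁱ⁺¹⁾, x₂⁽ⁱ⁾x₁⁽ⁱ⁾x₂⁽ⁱ⁾ = x₂⁽ⁱ⁺¹⁾⟩`,
is isomorphic to the cyclically presented group
`⟨y₁, …, y_d | yᵢ⁻¹ yᵢ₊₁² yᵢ₊₂⁻¹ yᵢ₊₁⟩` via `x₁⁽ⁱ⁾ ↦ yᵢ`.
Here `x₁⁽ⁱ⁾ = of (i, false)` and `x₂⁽ⁱ⁾ = of (i, true)`. -/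
theorem figure_eight_branched_cover_iso (d : ℕ) (hd : 2 ≤ d)
    (rels₁ : Set (FreeGroup (ZMod d × Bool)))
    (h₁ : rels₁ =
      (Set.range fun i : ZMod d =>
        FreeGroup.of (i, false) * FreeGroup.of (i, true) * (FreeGroup.of (i+1, false))⁻¹)
      ∪ (Set.range fun i : ZMod d =>
        FreeGroup.of (i, true) * FreeGroup.of (i, false) * FreeGroup.of (i, true)
          * (FreeGroup.of (i+1, true))⁻¹))
    (rels₂ : Set (FreeGroup (ZMod d)))
    (h₂ : rels₂ = Set.range fun i : ZMod d =>
      (FreeGroup.of i)⁻¹ * (FreeGroup.of (i+1)) ^ 2 * (FreeGroup.of (i+2))⁻¹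
        * FreeGroup.of (i+1)) :
    ∃ e : PresentedGroup rels₁ ≃* PresentedGroup rels₂,
      ∀ i : ZMod d, e (PresentedGroup.of (i, false)) = PresentedGroup.of i := by
  subst h₁ h₂
  set R1 : Set (FreeGroup (ZMod d × Bool)) :=
      (Set.range fun i : ZMod d =>
        FreeGroup.of (i, false) * FreeGroup.of (i, true) * (FreeGroup.of (i+1, false))⁻¹)
      ∪ (Set.range fun i : ZMod d =>
        FreeGroup.of (i, true) * FreeGroup.of (i, false) * FreeGroup.of (i, true)
          * (FreeGroup.of (i+1, true))⁻¹) with hR1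
  set R2 : Set (FreeGroup (ZMod d)) :=
      Set.range fun i : ZMod d =>
      (FreeGroup.of i)⁻¹ * (FreeGroup.of (i+1)) ^ 2 * (FreeGroup.of (i+2))⁻¹
        * FreeGroup.of (i+1) with hR2
  -- relations hold in the presented groups
  have rel2 : ∀ i : ZMod d,
      (PresentedGroup.of i : PresentedGroup R2)⁻¹ * (PresentedGroup.of (i+1)) ^ 2
        * (PresentedGroup.of (i+2))⁻¹ * PresentedGroup.of (i+1) = 1 := by
    intro i
    have : (PresentedGroup.mk R2) ((FreeGroup.of i)⁻¹ * (FreeGroup.of (i+1)) ^ 2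
        * (FreeGroup.of (i+2))⁻¹ * FreeGroup.of (i+1)) = 1 := by
      apply (QuotientGroup.eq_one_iff _).2
      exact Subgroup.subset_normalClosure ⟨i, rfl⟩
    simp only [map_mul, map_inv, map_pow] at this
    exact this
  have rel1a : ∀ i : ZMod d,
      (PresentedGroup.of (i, false) : PresentedGroup R1) * PresentedGroup.of (i, true)
        = PresentedGroup.of (i+1, false) := by
    intro i
    have : (PresentedGroup.mk R1) (FreeGroup.of (i, false) * FreeGroup.of (i, true)
        * (FreeGroup.of (i+1, false))⁻¹) = 1 := by
      apply (QuotientGroup.eq_one_iff _).2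
      exact Subgroup.subset_normalClosure (Or.inl ⟨i, rfl⟩)
    simp only [map_mul, map_inv] at this
    rw [mul_inv_eq_one] at this
    exact this
  have rel1b : ∀ i : ZMod d,
      (PresentedGroup.of (i, true) : PresentedGroup R1) * PresentedGroup.of (i, false)
        * PresentedGroup.of (i, true) = PresentedGroup.of (i+1, true) := by
    intro i
    have : (PresentedGroup.mk R1) (FreeGroup.of (i, true) * FreeGroup.of (i, false)
        * FreeGroup.of (i, true) * (FreeGroup.of (i+1, true))⁻¹) = 1 := by
      apply (QuotientGroup.eq_one_iff _).2
      exact Subgroup.subset_normalClosure (Or.inr ⟨i, rfl⟩)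
    simp only [map_mul, map_inv] at this
    rw [mul_inv_eq_one] at this
    exact this
  -- forward map
  let f : ZMod d × Bool → PresentedGroup R2 := fun p =>
    if p.2 then (PresentedGroup.of p.1)⁻¹ * PresentedGroup.of (p.1 + 1)
    else PresentedGroup.of p.1
  have hf : ∀ r ∈ R1, FreeGroup.lift f r = 1 := by
    rintro r (⟨i, rfl⟩ | ⟨i, rfl⟩) <;>
      simp only [map_mul, map_inv, FreeGroup.lift_apply_of, f, if_true, if_false, Bool.false_eq_true]
    · group
    · have := rel2 i
      rw [pow_two] at this
      rw [← this]
      group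
  -- backward map
  let g : ZMod d → PresentedGroup R1 := fun i => PresentedGroup.of (i, false)
  have hg : ∀ r ∈ R2, FreeGroup.lift g r = 1 := by
    rintro r ⟨i, rfl⟩
    simp only [map_mul, map_inv, map_pow, FreeGroup.lift_apply_of, g]
    have h2 : (i : ZMod d) + 2 = i + 1 + 1 := by ring
    rw [pow_two, h2, ← rel1a (i+1), ← rel1a i, ← rel1b i]
    group
  let φ := PresentedGroup.toGroup hf
  let ψ := PresentedGroup.toGroup hg
  have hψφ : ψ.comp φ = MonoidHom.id _ := by
    ext ⟨i, b⟩
    cases b <;>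
      simp only [MonoidHom.comp_apply, MonoidHom.id_apply, PresentedGroup.toGroup.of, f, g,
        if_true, if_false, Bool.false_eq_true, map_mul, map_inv, φ, ψ]
    · rw [← rel1a i]
      group
  have hφψ : φ.comp ψ = MonoidHom.id _ := by
    ext i
    simp [φ, ψ, f, g]
  exact ⟨MonoidHom.toMulEquiv φ ψ hψφ hφψ, fun i => by
    simp [MonoidHom.toMulEquiv, φ, f]⟩
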